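/- Let D be a 4-anti-traceable oriented graph and let P = v_1 v_2 ... v_s be a longest anti-directed path in D. If s < |V(D)|, then v_1 and v_s are adjacent in D. -/

import Mathlib

variable {V : Type*}

/-- An oriented graph: no 2-cycles (and hence no loops). -/
def Oriented (A : V → V → Prop) : Prop := ∀ u v, A u v → ¬ A v u

/-- `AltPath A b l` : the consecutive vertices of `l` are joined by arcs whose
directions alternate, the first arc being forward iff `b = true`. -/
def AltPath (A : V → V → Prop) : Bool → List V → Prop
  | _, [] => True
  | _, [_] => True
  | b, x :: y :: rest => (if b then A x y else A y x) ∧ AltPath A (!b) (y :: rest)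

/-- An anti-directed path: distinct vertices with alternating arcs. -/
def IsAntiPath (A : V → V → Prop) (l : List V) : Prop :=
  l.Nodup ∧ ∃ b : Bool, AltPath A b l

/-- The induced subdigraph on the vertex set `S` has a hamiltonian anti-directed path. -/
def AntiTraceableOn [DecidableEq V] (A : V → V → Prop) (S : Finset V) : Prop :=
  ∃ l : List V, l.Nodup ∧ l.toFinset = S ∧ ∃ b : Bool, AltPath A b l

/-- The digraph has a hamiltonian anti-directed path. -/
def AntiTraceable [Fintype V] [DecidableEq V] (A : V → V → Prop) : Prop :=
  AntiTraceableOn A Finset.univ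

/-- `k`-anti-traceable: order at least `k` and every induced subdigraph on `k`
vertices has a hamiltonian anti-directed path. -/
def KAntiTraceable [Fintype V] [DecidableEq V] (k : ℕ) (A : V → V → Prop) : Prop :=
  k ≤ Fintype.card V ∧ ∀ S : Finset V, S.card = k → AntiTraceableOn A S

/-- An anti-directed cycle: a cyclic sequence of distinct vertices, of even
length at least 4, in which even-indexed vertices are sources and odd-indexed
vertices are sinks of the two incident arcs. -/
def AltCycle (A : V → V → Prop) (l : List V) : Prop :=
  l.Nodup ∧ 4 ≤ l.length ∧ l.length % 2 = 0 ∧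
  ∀ i : Fin l.length,
    if i.1 % 2 = 0 then
      A (l.get i) (l.get ⟨(i.1 + 1) % l.length, Nat.mod_lt _ (Nat.zero_lt_of_lt i.2)⟩)
    else
      A (l.get ⟨(i.1 + 1) % l.length, Nat.mod_lt _ (Nat.zero_lt_of_lt i.2)⟩) (l.get i)

/-- The arcs among `{a,b,c}` form a subset of the arcs of a directed triangle. -/
def SubDirTriangle (A : V → V → Prop) (a b c : V) : Prop :=
  (¬ A b a ∧ ¬ A c b ∧ ¬ A a c) ∨ (¬ A a b ∧ ¬ A b c ∧ ¬ A c a)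

/-! ### Auxiliary machinery -/

def Arcb (A : V → V → Prop) (b : Bool) (x y : V) : Prop := if b then A x y else A y x

lemma arcb_not_iff (A : V → V → Prop) (b : Bool) (x y : V) :
    Arcb A (!b) x y ↔ Arcb A b y x := by cases b <;> simp [Arcb]

theorem altPath_prefix (A : V → V → Prop) :
    ∀ (b : Bool) (xs ys : List V), AltPath A b (xs ++ ys) → AltPath A b xs
  | _, [], _, _ => trivial
  | _, [_], _, _ => trivial
  | b, x :: y :: t, ys, h => ⟨h.1, altPath_prefix A (!b) (y :: t) ys h.2⟩

theorem altPath_concat (A : V → V → Prop) :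
    ∀ (b : Bool) (m : List V) (hm : m ≠ []) (x : V),
      AltPath A b m → Arcb A (if m.length % 2 = 1 then b else !b) (m.getLast hm) x →
      AltPath A b (m ++ [x])
  | _, [], hm, _, _, _ => absurd rfl hm
  | _, [_], _, _, _, ha => ⟨by simpa [Arcb, List.getLast] using ha, trivial⟩
  | b, y :: z :: t, hm, x, h, ha => by
    refine ⟨h.1, altPath_concat A (!b) (z :: t) (by simp) x h.2 ?_⟩
    have h1 : (y :: z :: t).getLast hm = (z :: t).getLast (by simp) :=
      List.getLast_cons (by simp)
    rw [h1] at ha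
    by_cases hc : (y :: z :: t).length % 2 = 1
    · rw [if_pos hc] at ha
      rw [if_neg (by simp only [List.length_cons] at hc ⊢; omega), Bool.not_not]
      exact ha
    · rw [if_neg hc] at ha
      rw [if_pos (by simp only [List.length_cons] at hc ⊢; omega)]
      exact ha

theorem altPath_reverse (A : V → V → Prop) :
    ∀ (b : Bool) (l : List V), AltPath A b l →
      AltPath A (if l.length % 2 = 0 then !b else b) l.reverse
  | _, [], _ => trivial
  | _, [_], _ => by simp [AltPath]
  | b, x :: y :: t, h => by
    have ih := altPath_reverse A (!b) (y :: t) h.2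
    have hrev : (x :: y :: t).reverse = (y :: t).reverse ++ [x] := by simp
    rw [hrev]
    set c := if (y :: t).length % 2 = 0 then !(!b) else !b with hc
    have hne : (y :: t).reverse ≠ [] := by simp
    have hlast : (y :: t).reverse.getLast hne = y := by
      simp [List.getLast_reverse]
    have harc : Arcb A (if (y :: t).reverse.length % 2 = 1 then c else !c)
        ((y :: t).reverse.getLast hne) x := by
      rw [hlast]
      have hb : (if (y :: t).reverse.length % 2 = 1 then c else !c) = !b := by
        rw [List.length_reverse, hc]
        rcases Nat.mod_two_eq_zero_or_one t.length with he | ho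
        · rw [if_pos (by simp only [List.length_cons]; omega),
            if_neg (by simp only [List.length_cons]; omega)]
        · rw [if_neg (by simp only [List.length_cons]; omega),
            if_pos (by simp only [List.length_cons]; omega), Bool.not_not]
      rw [hb, arcb_not_iff]
      exact h.1
    have hres := altPath_concat A c ((y :: t).reverse) hne x ih harc
    have hgoal : (if (x :: y :: t).length % 2 = 0 then !b else b) = c := by
      rw [hc]
      rcases Nat.mod_two_eq_zero_or_one t.length with he | ho
      · rw [if_pos (by simp only [List.length_cons]; omega),
          if_neg (by simp only [List.length_cons]; omega)]
      · rw [if_neg (by simp only [List.length_cons]; omega),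
          if_pos (by simp only [List.length_cons]; omega), Bool.not_not]
    rwa [hgoal]

lemma perm_swap_ends (x y : V) (Y : List V) :
    (x :: (Y ++ [y])).Perm (y :: (Y ++ [x])) := by
  exact ((List.perm_append_singleton y Y).cons x).trans
    (((List.Perm.swap x y Y).symm).trans (((List.perm_append_singleton x Y).symm).cons y))

/-! ### The finite model -/

def d3f (c : Fin 3) : Bool := c == 1
def d3b (c : Fin 3) : Bool := c == 2

open Classical in
noncomputable def arc3 (A : V → V → Prop) (u v : V) : Fin 3 :=
  if A u v then 1 else if A v u then 2 else 0

lemma arc3_fwd {A : V → V → Prop} {u v : V} (h : A u v) : arc3 A u v = 1 := by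
  simp [arc3, h]

lemma arc3_bwd {A : V → V → Prop} (hA : Oriented A) {u v : V} (h : A v u) :
    arc3 A u v = 2 := by
  have : ¬ A u v := fun h' => hA v u h h'
  simp [arc3, this, h]

lemma arc3_one {A : V → V → Prop} {u v : V} (h : arc3 A u v = 1) : A u v := by
  rw [arc3] at h
  split_ifs at h with h1 h2
  · exact h1
  · exact absurd h (by decide)
  · exact absurd h (by decide)

lemma arc3_two {A : V → V → Prop} {u v : V} (h : arc3 A u v = 2) : A v u := by
  rw [arc3] at h
  split_ifs at h with h1 h2
  · exact absurd h (by decide)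
  · exact h2
  · exact absurd h (by decide)

def certM (b p : Bool) (c1 c2 c3 c4 c5 c6 c7 : Fin 3) (i j : Fin 5) : Bool :=
  match i.val, j.val with
  | 0, 1 => b
  | 1, 0 => !b
  | 2, 3 => if p then b else !b
  | 3, 2 => !(if p then b else !b)
  | 0, 2 => d3f c1 | 2, 0 => d3b c1
  | 0, 4 => d3f c2 | 4, 0 => d3b c2
  | 1, 2 => d3f c3 | 2, 1 => d3b c3
  | 1, 3 => d3f c4 | 3, 1 => d3b c4
  | 1, 4 => d3f c5 | 4, 1 => d3b c5
  | 2, 4 => d3f c6 | 4, 2 => d3b c6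
  | 3, 4 => d3f c7 | 4, 3 => d3b c7
  | _, _ => false

def ham4B {α : Type*} (g : α → α → Bool) (a b c d : α) : Bool :=
  (g a b && g c b && g c d) ||
  (g a b && g d b && g d c) ||
  (g a c && g b c && g b d) ||
  (g a c && g d c && g d b) ||
  (g a d && g b d && g b c) ||
  (g a d && g c d && g c b) ||
  (g b a && g c a && g c d) ||
  (g b a && g d a && g d c) ||
  (g b c && g a c && g a d) ||
  (g b c && g d c && g d a) ||
  (g b d && g a d && g a c) ||
  (g b d && g c d && g c a) ||
  (g c a && g b a && g b d) ||
  (g c a && g d a && g d b) ||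
  (g c b && g a b && g a d) ||
  (g c b && g d b && g d a) ||
  (g c d && g a d && g a b) ||
  (g c d && g b d && g b a) ||
  (g d a && g b a && g b c) ||
  (g d a && g c a && g c b) ||
  (g d b && g a b && g a c) ||
  (g d b && g c b && g c a) ||
  (g d c && g a c && g a b) ||
  (g d c && g b c && g b a)

set_option maxRecDepth 100000 in
set_option maxHeartbeats 4000000 in
lemma cert : ∀ (b p : Bool) (c1 c2 c3 c4 c5 c6 c7 : Fin 3),
    cond (!b) (certM b p c1 c2 c3 c4 c5 c6 c7 4 0) (certM b p c1 c2 c3 c4 c5 c6 c7 0 4) = false →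
    cond (!(if p then !b else b)) (certM b p c1 c2 c3 c4 c5 c6 c7 4 3)
      (certM b p c1 c2 c3 c4 c5 c6 c7 3 4) = false →
    (cond (!b) (certM b p c1 c2 c3 c4 c5 c6 c7 0 4) (certM b p c1 c2 c3 c4 c5 c6 c7 4 0) &&
     cond b (certM b p c1 c2 c3 c4 c5 c6 c7 4 1) (certM b p c1 c2 c3 c4 c5 c6 c7 1 4)) = false →
    (cond (!(if p then !b else b)) (certM b p c1 c2 c3 c4 c5 c6 c7 3 4)
       (certM b p c1 c2 c3 c4 c5 c6 c7 4 3) &&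
     cond (if p then !b else b) (certM b p c1 c2 c3 c4 c5 c6 c7 4 2)
       (certM b p c1 c2 c3 c4 c5 c6 c7 2 4)) = false →
    (cond (!b) (certM b p c1 c2 c3 c4 c5 c6 c7 4 3) (certM b p c1 c2 c3 c4 c5 c6 c7 3 4) &&
     cond b (certM b p c1 c2 c3 c4 c5 c6 c7 3 1) (certM b p c1 c2 c3 c4 c5 c6 c7 1 3) &&
     cond (if p then b else !b) (certM b p c1 c2 c3 c4 c5 c6 c7 2 0)
       (certM b p c1 c2 c3 c4 c5 c6 c7 0 2)) = false →
    (ham4B (certM b p c1 c2 c3 c4 c5 c6 c7) 0 1 2 3 &&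
     ham4B (certM b p c1 c2 c3 c4 c5 c6 c7) 0 1 2 4 &&
     ham4B (certM b p c1 c2 c3 c4 c5 c6 c7) 0 1 3 4 &&
     ham4B (certM b p c1 c2 c3 c4 c5 c6 c7) 0 2 3 4 &&
     ham4B (certM b p c1 c2 c3 c4 c5 c6 c7) 1 2 3 4) = true →
    False := by
  decide

lemma d3f_eq_false {A : V → V → Prop} {u v : V} (h : ¬ A u v) :
    d3f (arc3 A u v) = false := by
  rw [d3f, beq_eq_false_iff_ne]
  exact fun hc => h (arc3_one hc)

lemma d3b_eq_false {A : V → V → Prop} {u v : V} (h : ¬ A v u) :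
    d3b (arc3 A u v) = false := by
  rw [d3b, beq_eq_false_iff_ne]
  exact fun hc => h (arc3_two hc)

lemma condA_false {A : V → V → Prop} {β : Bool} {u v : V} (h : ¬ Arcb A β u v) :
    cond β (d3f (arc3 A u v)) (d3b (arc3 A u v)) = false := by
  cases β
  · exact d3b_eq_false h
  · exact d3f_eq_false h

lemma condB_false {A : V → V → Prop} {β : Bool} {u v : V} (h : ¬ Arcb A β v u) :
    cond β (d3b (arc3 A u v)) (d3f (arc3 A u v)) = false := by
  cases β
  · exact d3f_eq_false h
  · exact d3b_eq_false h

theorem transfer [DecidableEq V] {A : V → V → Prop} {α : Type}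
    (M : α → α → Bool) (f : α → V) (i j k l : α)
    (hM : ∀ x y : α, A (f x) (f y) → M x y = true)
    (hij : f i ≠ f j) (hik : f i ≠ f k) (hil : f i ≠ f l)
    (hjk : f j ≠ f k) (hjl : f j ≠ f l) (hkl : f k ≠ f l)
    (h : AntiTraceableOn A {f i, f j, f k, f l}) :
    ham4B M i j k l = true := by
  obtain ⟨m, hnd, hfs, b', halt⟩ := h
  have hcard : ({f i, f j, f k, f l} : Finset V).card = 4 := by
    rw [Finset.card_insert_of_notMem (by simp [hij, hik, hil]),
      Finset.card_insert_of_notMem (by simp [hjk, hjl]),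
      Finset.card_insert_of_notMem (by simp [hkl]), Finset.card_singleton]
  have hlen : m.length = 4 := by
    rw [← List.toFinset_card_of_nodup hnd, hfs, hcard]
  match m, hlen with
  | [x1, x2, x3, x4], _ =>
  have hm : ∀ z : V, z ∈ [x1, x2, x3, x4] → z = f i ∨ z = f j ∨ z = f k ∨ z = f l := by
    intro z hz
    have : z ∈ ({f i, f j, f k, f l} : Finset V) := by
      rw [← hfs]; simpa using hz
    simpa using this
  have h1 := hm x1 (by simp)
  have h2 := hm x2 (by simp)
  have h3 := hm x3 (by simp)
  have h4 := hm x4 (by simp)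
  simp only [List.nodup_cons, List.mem_cons, List.not_mem_nil, or_false,
    List.mem_singleton, List.nodup_nil, and_true, not_or, not_false_eq_true] at hnd
  obtain ⟨⟨n12, n13, n14⟩, ⟨n23, n24⟩, n34⟩ := hnd
  cases b' with
  | true =>
    simp only [AltPath, if_true, Bool.not_true, if_false, and_true] at halt
    obtain ⟨a1, a2, a3⟩ := halt
    rcases h1 with rfl | rfl | rfl | rfl <;> rcases h2 with rfl | rfl | rfl | rfl <;>
      rcases h3 with rfl | rfl | rfl | rfl <;> rcases h4 with rfl | rfl | rfl | rfl <;>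
      first
      | (exact absurd rfl (by assumption))
      | (have k1 := hM _ _ a1; have k2 := hM _ _ a2; have k3 := hM _ _ a3;
         simp [ham4B, k1, k2, k3])
  | false =>
    simp only [AltPath, if_false, Bool.not_false, if_true, and_true] at halt
    obtain ⟨a1, a2, a3⟩ := halt
    rcases h1 with rfl | rfl | rfl | rfl <;> rcases h2 with rfl | rfl | rfl | rfl <;>
      rcases h3 with rfl | rfl | rfl | rfl <;> rcases h4 with rfl | rfl | rfl | rfl <;>
      first
      | (exact absurd rfl (by assumption))
      | (have k1 := hM _ _ a1; have k2 := hM _ _ a2; have k3 := hM _ _ a3;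
         simp [ham4B, k1, k2, k3])

theorem stmt9 [Fintype V] [DecidableEq V] (A : V → V → Prop)
    (hA : Oriented A) (h4 : KAntiTraceable 4 A)
    (l : List V) (hP : IsAntiPath A l)
    (hlong : ∀ m : List V, IsAntiPath A m → m.length ≤ l.length)
    (h2 : 2 ≤ l.length) (hs : l.length < Fintype.card V) :
    A (l.get ⟨0, by omega⟩) (l.get ⟨l.length - 1, by omega⟩) ∨
    A (l.get ⟨l.length - 1, by omega⟩) (l.get ⟨0, by omega⟩) := by
  classical
  obtain ⟨hcard4, hAT⟩ := h4
  have hlen4 : 4 ≤ l.length := by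
    by_contra hlt
    push_neg at hlt
    obtain ⟨S, -, hScard⟩ := Finset.exists_subset_card_eq (s := (Finset.univ : Finset V)) (n := 4)
      (by simpa using hcard4)
    obtain ⟨m, hm1, hm2, hb'⟩ := hAT S hScard
    have hle := hlong m ⟨hm1, hb'⟩
    have hm4 : m.length = 4 := by rw [← List.toFinset_card_of_nodup hm1, hm2, hScard]
    omega
  by_contra hcon
  push_neg at hcon
  obtain ⟨hc1, hc2⟩ := hcon
  obtain ⟨b, hAlt⟩ := hP.2
  have hnd := hP.1
  obtain ⟨w, hw⟩ : ∃ w, w ∉ l.toFinset := by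
    by_contra hno
    push_neg at hno
    have hsub : (Finset.univ : Finset V) ⊆ l.toFinset := fun x _ => hno x
    have hcc := Finset.card_le_card hsub
    rw [Finset.card_univ] at hcc
    have hle := List.toFinset_card_le l
    omega
  have hwl : w ∉ l := fun h => hw (List.mem_toFinset.mpr h)
  clear hP hw
  rcases l with _ | ⟨v1, t0⟩
  · simp at hlen4
  rcases t0 with _ | ⟨v2, t⟩
  · simp at hlen4
  have h2t : 2 ≤ t.length := by
    have h := hlen4
    simp only [List.length_cons] at h
    omega
  obtain ⟨mid, vs1, vs, rfl⟩ : ∃ mid vs1 vs, t = mid ++ [vs1, vs] := by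
    rcases ht : t.reverse with _ | ⟨d0, u⟩
    · exfalso
      have := congrArg List.length ht
      simp only [List.length_reverse, List.length_nil] at this
      omega
    rcases u with _ | ⟨c0, u'⟩
    · exfalso
      have := congrArg List.length ht
      simp only [List.length_reverse, List.length_cons, List.length_nil] at this
      omega
    refine ⟨u'.reverse, c0, d0, ?_⟩
    have h5 := congrArg List.reverse ht
    simpa using h5
  -- abbreviations
  set L : List V := v1 :: v2 :: (mid ++ [vs1, vs]) with hL
  have hLlen : L.length = mid.length + 4 := by simp [hL]
  -- endpoints of the goal
  have hget0 : L.get ⟨0, by omega⟩ = v1 := rfl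
  have hgetlast : L.get ⟨L.length - 1, by omega⟩ = vs := by
    have hne : L ≠ [] := by rw [hL]; simp
    have hq : L.getLast? = some vs := by
      rw [hL, show v1 :: v2 :: (mid ++ [vs1, vs]) = (v1 :: v2 :: (mid ++ [vs1])) ++ [vs] by simp]
      exact List.getLast?_concat
    have h5 := List.getLast?_eq_getLast (l := L) hne
    rw [hq] at h5
    have h4 : L.getLast hne = vs := by injection h5 with h5'; exact h5'.symm
    have h6 : L.getLast hne = L.get ⟨L.length - 1, by omega⟩ := by simp [List.getLast_eq_getElem]
    rw [h4] at h6
    exact h6.symm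
  have hca : ¬ A v1 vs := fun h => hc1 ((congrArg₂ A hget0 hgetlast).mpr h)
  have hcb : ¬ A vs v1 := fun h => hc2 ((congrArg₂ A hgetlast hget0).mpr h)
  -- nodup facts
  have hndL : L.Nodup := hnd
  have hwL : w ∉ L := hwl
  -- reverse form
  have hLrev : L.reverse = vs :: vs1 :: (mid.reverse ++ [v2, v1]) := by simp [hL]
  set r : Bool := if L.length % 2 = 0 then !b else b with hr
  have hrevAlt : AltPath A r (vs :: vs1 :: (mid.reverse ++ [v2, v1])) := by
    rw [← hLrev, hr]
    exact altPath_reverse A b L hAlt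
  set e : Bool := if L.length % 2 = 0 then b else !b with he
  have her : e = !r := by
    rw [he, hr]; by_cases hc : L.length % 2 = 0 <;> simp [hc]
  -- basic arcs
  have a12 : Arcb A b v1 v2 := hAlt.1
  have asv : Arcb A r vs vs1 := hrevAlt.1
  -- the five "no longer path" constraints
  have L1 : ¬ Arcb A (!b) w v1 := by
    intro harc
    have halt : AltPath A (!b) (w :: L) := by
      refine ⟨harc, ?_⟩
      rw [Bool.not_not]
      exact hAlt
    have hle := hlong (w :: L) ⟨List.nodup_cons.mpr ⟨hwL, hndL⟩, ⟨!b, halt⟩⟩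
    simp only [List.length_cons] at hle
    omega
  have L2 : ¬ Arcb A (!r) w vs := by
    intro harc
    have halt : AltPath A (!r) (w :: vs :: vs1 :: (mid.reverse ++ [v2, v1])) := by
      refine ⟨harc, ?_⟩
      rw [Bool.not_not]
      exact hrevAlt
    have hndrev : (w :: vs :: vs1 :: (mid.reverse ++ [v2, v1])).Nodup := by
      rw [← hLrev]
      exact List.nodup_cons.mpr ⟨by simpa using hwL, List.nodup_reverse.mpr hndL⟩
    have hle := hlong _ ⟨hndrev, ⟨!r, halt⟩⟩
    simp only [List.length_cons, List.length_append, List.length_reverse,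
      List.length_singleton, hLlen] at hle
    omega
  have L3 : ¬ (Arcb A (!b) v1 w ∧ Arcb A b w v2) := by
    rintro ⟨ha1, ha2⟩
    have halt : AltPath A (!b) (v1 :: w :: v2 :: (mid ++ [vs1, vs])) := by
      refine ⟨ha1, ?_⟩
      rw [Bool.not_not]
      exact ⟨ha2, hAlt.2⟩
    have hperm : (w :: L).Perm (v1 :: w :: v2 :: (mid ++ [vs1, vs])) := by
      rw [hL]
      exact List.Perm.swap v1 w _
    have hndq : (v1 :: w :: v2 :: (mid ++ [vs1, vs])).Nodup :=
      hperm.nodup (List.nodup_cons.mpr ⟨hwL, hndL⟩)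
    have hle := hlong _ ⟨hndq, ⟨!b, halt⟩⟩
    simp only [List.length_cons, List.length_append, List.length_singleton, hLlen] at hle
    omega
  have L4 : ¬ (Arcb A (!r) vs w ∧ Arcb A r w vs1) := by
    rintro ⟨ha1, ha2⟩
    have halt : AltPath A (!r) (vs :: w :: vs1 :: (mid.reverse ++ [v2, v1])) := by
      refine ⟨ha1, ?_⟩
      rw [Bool.not_not]
      exact ⟨ha2, hrevAlt.2⟩
    have hndrev : (w :: L.reverse).Nodup :=
      List.nodup_cons.mpr ⟨by simpa using hwL, List.nodup_reverse.mpr hndL⟩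
    have hperm : (w :: L.reverse).Perm (vs :: w :: vs1 :: (mid.reverse ++ [v2, v1])) := by
      rw [hLrev]
      exact List.Perm.swap vs w _
    have hle := hlong _ ⟨hperm.nodup hndrev, ⟨!r, halt⟩⟩
    simp only [List.length_cons, List.length_append, List.length_reverse,
      List.length_singleton, hLlen] at hle
    omega
  have L5 : ¬ (Arcb A (!b) w vs ∧ Arcb A b vs v2 ∧ Arcb A e vs1 v1) := by
    rintro ⟨ha1, ha2, ha3⟩
    set Y : List V := (v2 :: mid) ++ [vs1] with hY
    have hYvs : v2 :: (mid ++ [vs1, vs]) = Y ++ [vs] := by simp [hY]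
    have hYalt : AltPath A (!b) (Y ++ [vs]) := by rw [← hYvs]; exact hAlt.2
    have hYp : AltPath A (!b) Y := altPath_prefix A (!b) Y [vs] hYalt
    have hYne : Y ≠ [] := by simp [hY]
    have hYlast : Y.getLast hYne = vs1 := by
      have hq2 : Y.getLast? = some vs1 := List.getLast?_concat
      have h5 := List.getLast?_eq_getLast (l := Y) hYne
      rw [hq2] at h5
      injection h5 with h5'
      exact h5'.symm
    have hYlen : Y.length = mid.length + 2 := by simp [hY]
    have harc : Arcb A (if Y.length % 2 = 1 then !b else !(!b)) (Y.getLast hYne) v1 := by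
      rw [hYlast]
      have hb : (if Y.length % 2 = 1 then !b else !(!b)) = e := by
        rw [hYlen, he, hLlen, Bool.not_not]
        rcases Nat.mod_two_eq_zero_or_one mid.length with hpar | hpar
        · rw [if_neg (by omega), if_pos (by omega)]
        · rw [if_pos (by omega), if_neg (by omega)]
      rw [hb]
      exact ha3
    have hYv1 : AltPath A (!b) (Y ++ [v1]) := altPath_concat A (!b) Y hYne v1 hYp harc
    have hYv1' : AltPath A (!b) (v2 :: (mid ++ [vs1, v1])) := by
      have : Y ++ [v1] = v2 :: (mid ++ [vs1, v1]) := by simp [hY]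
      rwa [this] at hYv1
    have halt : AltPath A (!b) (w :: vs :: v2 :: (mid ++ [vs1, v1])) := by
      refine ⟨ha1, ?_⟩
      rw [Bool.not_not]
      exact ⟨ha2, hYv1'⟩
    have hperm : (w :: L).Perm (w :: vs :: v2 :: (mid ++ [vs1, v1])) := by
      refine List.Perm.cons w ?_
      have h1 : L = v1 :: ((v2 :: mid ++ [vs1]) ++ [vs]) := by simp [hL]
      have h2' : vs :: v2 :: (mid ++ [vs1, v1]) = vs :: ((v2 :: mid ++ [vs1]) ++ [v1]) := by
        simp
      rw [h1, h2']
      exact perm_swap_ends v1 vs _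
    have hndq : (w :: vs :: v2 :: (mid ++ [vs1, v1])).Nodup :=
      hperm.nodup (List.nodup_cons.mpr ⟨hwL, hndL⟩)
    have hle := hlong _ ⟨hndq, ⟨!b, halt⟩⟩
    simp only [List.length_cons, List.length_append, List.length_singleton, hLlen] at hle
    omega
  -- distinctness
  have hnd' := hndL
  rw [hL] at hnd'
  simp only [List.nodup_cons, List.mem_cons, List.mem_append, List.mem_cons,
    List.mem_singleton, List.not_mem_nil, or_false, not_or] at hnd'
  obtain ⟨⟨n12, n1m, n1s1, n1s⟩, ⟨n2m, n2s1, n2s⟩, hndrest⟩ := hnd'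
  have ns1s : vs1 ≠ vs := by
    have : (mid ++ [vs1, vs]).Nodup := hndrest
    have h1 : vs1 ∈ mid ++ [vs1, vs] := by simp
    rcases List.nodup_append.mp (by simpa using this) with ⟨-, h2'', -⟩
    simp only [List.nodup_cons, List.mem_singleton, List.nodup_nil, and_true] at h2''
    exact h2''.1
  have hwL' := hwL
  rw [hL] at hwL'
  simp only [List.mem_cons, List.mem_append, List.mem_singleton, List.not_mem_nil,
    not_or, not_false_eq_true, and_true] at hwL'
  obtain ⟨wn1, wn2, wnm, wns1, wns⟩ := hwL'
  -- the model
  set p : Bool := decide (L.length % 2 = 0) with hp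
  set c1 : Fin 3 := arc3 A v1 vs1 with hcc1
  set c2 : Fin 3 := arc3 A v1 w with hcc2
  set c3 : Fin 3 := arc3 A v2 vs1 with hcc3
  set c4 : Fin 3 := arc3 A v2 vs with hcc4
  set c5 : Fin 3 := arc3 A v2 w with hcc5
  set c6 : Fin 3 := arc3 A vs1 w with hcc6
  set c7 : Fin 3 := arc3 A vs w with hcc7
  set M : Fin 5 → Fin 5 → Bool := certM b p c1 c2 c3 c4 c5 c6 c7 with hM
  let f : Fin 5 → V := fun i => match i.val with
    | 0 => v1 | 1 => v2 | 2 => vs1 | 3 => vs | _ => w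
  have hrp : (if p then !b else b) = r := by
    rw [hr, hp]
    by_cases hc : L.length % 2 = 0 <;> simp [hc]
  have hep : (if p then b else !b) = e := by
    rw [he, hp]
    by_cases hc : L.length % 2 = 0 <;> simp [hc]
  have hMfact : ∀ x y : Fin 5, A (f x) (f y) → M x y = true := by
    intro x y hxy
    fin_cases x <;> fin_cases y <;> rw [hM]
    · exact absurd hxy (fun h => hA _ _ h h)
    · -- (0,1) : A v1 v2 → b = true
      have hxy' : A v1 v2 := hxy
      rcases Bool.eq_false_or_eq_true b with hb | hb
      · exact hb
      · exfalso
        rw [hb] at a12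
        have a12' : A v2 v1 := a12
        exact hA _ _ a12' hxy'
    · have hxy' : A v1 vs1 := hxy
      show d3f c1 = true
      rw [hcc1, arc3_fwd hxy']; rfl
    · have hxy' : A v1 vs := hxy
      exact absurd hxy' hca
    · have hxy' : A v1 w := hxy
      show d3f c2 = true
      rw [hcc2, arc3_fwd hxy']; rfl
    · -- (1,0) : A v2 v1 → !b = true
      have hxy' : A v2 v1 := hxy
      rcases Bool.eq_false_or_eq_true b with hb | hb
      · exfalso
        rw [hb] at a12
        have a12' : A v1 v2 := a12
        exact hA _ _ a12' hxy'
      · show (!b) = true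
        rw [hb]; rfl
    · exact absurd hxy (fun h => hA _ _ h h)
    · have hxy' : A v2 vs1 := hxy
      show d3f c3 = true
      rw [hcc3, arc3_fwd hxy']; rfl
    · have hxy' : A v2 vs := hxy
      show d3f c4 = true
      rw [hcc4, arc3_fwd hxy']; rfl
    · have hxy' : A v2 w := hxy
      show d3f c5 = true
      rw [hcc5, arc3_fwd hxy']; rfl
    · have hxy' : A vs1 v1 := hxy
      show d3b c1 = true
      rw [hcc1, arc3_bwd hA hxy']; rfl
    · have hxy' : A vs1 v2 := hxy
      show d3b c3 = true
      rw [hcc3, arc3_bwd hA hxy']; rfl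
    · exact absurd hxy (fun h => hA _ _ h h)
    · -- (2,3) : A vs1 vs
      have hxy' : A vs1 vs := hxy
      show (if p then b else !b) = true
      rw [hep, her]
      rcases Bool.eq_false_or_eq_true r with hrr | hrr
      · exfalso
        rw [hrr] at asv
        have asv' : A vs vs1 := asv
        exact hA _ _ asv' hxy'
      · show (!r) = true
        rw [hrr]; rfl
    · have hxy' : A vs1 w := hxy
      show d3f c6 = true
      rw [hcc6, arc3_fwd hxy']; rfl
    · have hxy' : A vs v1 := hxy
      exact absurd hxy' hcb
    · have hxy' : A vs v2 := hxy
      show d3b c4 = true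
      rw [hcc4, arc3_bwd hA hxy']; rfl
    · -- (3,2) : A vs vs1
      have hxy' : A vs vs1 := hxy
      show (!(if p then b else !b)) = true
      rw [hep, her, Bool.not_not]
      rcases Bool.eq_false_or_eq_true r with hrr | hrr
      · exact hrr
      · exfalso
        rw [hrr] at asv
        have asv' : A vs1 vs := asv
        exact hA _ _ asv' hxy'
    · exact absurd hxy (fun h => hA _ _ h h)
    · have hxy' : A vs w := hxy
      show d3f c7 = true
      rw [hcc7, arc3_fwd hxy']; rfl
    · have hxy' : A w v1 := hxy
      show d3b c2 = true
      rw [hcc2, arc3_bwd hA hxy']; rfl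
    · have hxy' : A w v2 := hxy
      show d3b c5 = true
      rw [hcc5, arc3_bwd hA hxy']; rfl
    · have hxy' : A w vs1 := hxy
      show d3b c6 = true
      rw [hcc6, arc3_bwd hA hxy']; rfl
    · have hxy' : A w vs := hxy
      show d3b c7 = true
      rw [hcc7, arc3_bwd hA hxy']; rfl
    · exact absurd hxy (fun h => hA _ _ h h)
  -- constraints in model form
  have hcon1 : cond (!b) (M 4 0) (M 0 4) = false := by
    rw [hM]
    show cond (!b) (d3b c2) (d3f c2) = false
    rw [hcc2]
    exact condB_false L1
  have hcon2 : cond (!(if p then !b else b)) (M 4 3) (M 3 4) = false := by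
    rw [hM, hrp]
    show cond (!r) (d3b c7) (d3f c7) = false
    rw [hcc7]
    exact condB_false L2
  have hcon3 : (cond (!b) (M 0 4) (M 4 0) && cond b (M 4 1) (M 1 4)) = false := by
    show (cond (!b) (d3f c2) (d3b c2) && cond b (d3b c5) (d3f c5)) = false
    rw [hcc2, hcc5]
    rcases Classical.em (Arcb A (!b) v1 w) with h1 | h1
    · have h2 : ¬ Arcb A b w v2 := fun h2 => L3 ⟨h1, h2⟩
      rw [condB_false h2, Bool.and_false]
    · rw [condA_false h1, Bool.false_and]
  have hcon4 : (cond (!(if p then !b else b)) (M 3 4) (M 4 3) &&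
      cond (if p then !b else b) (M 4 2) (M 2 4)) = false := by
    rw [hM, hrp]
    show (cond (!r) (d3f c7) (d3b c7) && cond r (d3b c6) (d3f c6)) = false
    rw [hcc7, hcc6]
    rcases Classical.em (Arcb A (!r) vs w) with h1 | h1
    · have h2 : ¬ Arcb A r w vs1 := fun h2 => L4 ⟨h1, h2⟩
      rw [condB_false h2, Bool.and_false]
    · rw [condA_false h1, Bool.false_and]
  have hcon5 : (cond (!b) (M 4 3) (M 3 4) && cond b (M 3 1) (M 1 3) &&
      cond (if p then b else !b) (M 2 0) (M 0 2)) = false := by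
    rw [hM, hep, her]
    show (cond (!b) (d3b c7) (d3f c7) && cond b (d3b c4) (d3f c4) &&
      cond (!r) (d3b c1) (d3f c1)) = false
    rw [hcc7, hcc4, hcc1]
    rcases Classical.em (Arcb A (!b) w vs) with h1 | h1
    · rcases Classical.em (Arcb A b vs v2) with h2 | h2
      · have h3 : ¬ Arcb A (!r) vs1 v1 := fun h3 => L5 ⟨h1, h2, her ▸ h3⟩
        rw [condB_false h3, Bool.and_false]
      · rw [condB_false h2, Bool.and_false, Bool.false_and]
    · rw [condB_false h1, Bool.false_and, Bool.false_and]
  -- ham facts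
  have hne01 : f 0 ≠ f 1 := n12
  have hne02 : f 0 ≠ f 2 := n1s1
  have hne03 : f 0 ≠ f 3 := n1s
  have hne04 : f 0 ≠ f 4 := fun h => wn1 h.symm
  have hne12 : f 1 ≠ f 2 := n2s1
  have hne13 : f 1 ≠ f 3 := n2s
  have hne14 : f 1 ≠ f 4 := fun h => wn2 h.symm
  have hne23 : f 2 ≠ f 3 := ns1s
  have hne24 : f 2 ≠ f 4 := fun h => wns1 h.symm
  have hne34 : f 3 ≠ f 4 := fun h => wns h.symm
  have hham1 : ham4B M 0 1 2 3 = true := by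
    refine transfer M f 0 1 2 3 hMfact hne01 hne02 hne03 hne12 hne13 hne23 ?_
    refine hAT _ ?_
    rw [Finset.card_insert_of_notMem (by simp [hne01, hne02, hne03]),
      Finset.card_insert_of_notMem (by simp [hne12, hne13]),
      Finset.card_insert_of_notMem (by simp [hne23]), Finset.card_singleton]
  have hham2 : ham4B M 0 1 2 4 = true := by
    refine transfer M f 0 1 2 4 hMfact hne01 hne02 hne04 hne12 hne14 hne24 ?_
    refine hAT _ ?_
    rw [Finset.card_insert_of_notMem (by simp [hne01, hne02, hne04]),
      Finset.card_insert_of_notMem (by simp [hne12, hne14]),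
      Finset.card_insert_of_notMem (by simp [hne24]), Finset.card_singleton]
  have hham3 : ham4B M 0 1 3 4 = true := by
    refine transfer M f 0 1 3 4 hMfact hne01 hne03 hne04 hne13 hne14 hne34 ?_
    refine hAT _ ?_
    rw [Finset.card_insert_of_notMem (by simp [hne01, hne03, hne04]),
      Finset.card_insert_of_notMem (by simp [hne13, hne14]),
      Finset.card_insert_of_notMem (by simp [hne34]), Finset.card_singleton]
  have hham4 : ham4B M 0 2 3 4 = true := by
    refine transfer M f 0 2 3 4 hMfact hne02 hne03 hne04 hne23 hne24 hne34 ?_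
    refine hAT _ ?_
    rw [Finset.card_insert_of_notMem (by simp [hne02, hne03, hne04]),
      Finset.card_insert_of_notMem (by simp [hne23, hne24]),
      Finset.card_insert_of_notMem (by simp [hne34]), Finset.card_singleton]
  have hham5 : ham4B M 1 2 3 4 = true := by
    refine transfer M f 1 2 3 4 hMfact hne12 hne13 hne14 hne23 hne24 hne34 ?_
    refine hAT _ ?_
    rw [Finset.card_insert_of_notMem (by simp [hne12, hne13, hne14]),
      Finset.card_insert_of_notMem (by simp [hne23, hne24]),
      Finset.card_insert_of_notMem (by simp [hne34]), Finset.card_singleton]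
  exact cert b p c1 c2 c3 c4 c5 c6 c7 hcon1 hcon2 hcon3 hcon4 hcon5
    (by rw [hham1, hham2, hham3, hham4, hham5]; rfl)
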